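/- Let g ∈ ℝ[[x]] satisfy g(x)·g(−x) = 1, and define h₁ = g + 1 and h_{n+1} = g·hₙ + hₙ(−x) for n ≥ 1, where hₙ(−x) denotes rescaling x ↦ −x. Then for every n ≥ 1 and every j ∈ ℕ: g(x) · [hₙ(x)·x^j evaluated at x ↦ −x] = (−1)^j · hₙ(x)·x^j, i.e. g(x)·(−1)^j·hₙ(−x)·x^j = (−1)^j·hₙ(x)·x^j with the stated identity g·hₙ(−x) = hₙ applied columnwise. (Interpretation: the columns of the Riordan matrix Bₙ = (hₙ(x), x) are R-invariant or inverse R-invariant sequences of the first kind for the Riordan involution R = (g(x), −x): the even-indexed columns are eigenvectors of R with eigenvalue 1 and the odd-indexed columns are eigenvectors with eigenvalue −1.) -/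

import Mathlib

open PowerSeries Finset

lemma key_aux (g : PowerSeries ℝ)
    (hg : g * PowerSeries.rescale (-1 : ℝ) g = 1)
    (h : ℕ → PowerSeries ℝ)
    (h1 : h 1 = g + 1)
    (hrec : ∀ n : ℕ, 1 ≤ n →
      h (n + 1) = g * h n + PowerSeries.rescale (-1 : ℝ) (h n)) :
    ∀ n : ℕ, 1 ≤ n → g * PowerSeries.rescale (-1 : ℝ) (h n) = h n := by
  intro n hn
  induction n with
  | zero => omega
  | succ n ih =>
    rcases Nat.eq_or_lt_of_le hn with h' | h'
    · simp only [← h', h1]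
      rw [map_add, map_one, mul_add, hg, mul_one, add_comm]
    · have hn1 : 1 ≤ n := by omega
      rw [hrec n hn1, map_add, map_mul, rescale_rescale]
      have h2 : ((-1 : ℝ) * (-1)) = 1 := by ring
      rw [h2, rescale_one, RingHom.id_apply]
      linear_combination (rescale (-1 : ℝ) (h n)) * hg

/-- Let `g · g(−x) = 1` (so `R = (g(x), −x)` is a Riordan involution), and define
`h₁ = g + 1`, `h_{n+1} = g·hₙ + hₙ(−x)`. Then for every `n ≥ 1` and every `j`, the `j`-th
column `hₙ(x)·x^j` of the Riordan matrix `Bₙ = (hₙ(x), x)` satisfies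
`g(x)·(hₙ·x^j)(−x) = (−1)^j·hₙ(x)·x^j`; that is, the columns of `Bₙ` are `R`-invariant or
inverse `R`-invariant sequences of the first kind. -/
theorem stmt_19 (g : PowerSeries ℝ)
    (hg : g * PowerSeries.rescale (-1 : ℝ) g = 1)
    (h : ℕ → PowerSeries ℝ)
    (h1 : h 1 = g + 1)
    (hrec : ∀ n : ℕ, 1 ≤ n →
      h (n + 1) = g * h n + PowerSeries.rescale (-1 : ℝ) (h n)) :
    ∀ n : ℕ, 1 ≤ n → ∀ j : ℕ,
      g * PowerSeries.rescale (-1 : ℝ) (h n * PowerSeries.X ^ j) =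
        (-1 : PowerSeries ℝ) ^ j * (h n * PowerSeries.X ^ j) := by
  intro n hn j
  rw [map_mul, map_pow, rescale_X]
  have hX : (PowerSeries.C (-1 : ℝ) * X : PowerSeries ℝ) ^ j = (-1 : PowerSeries ℝ) ^ j * X ^ j := by
    rw [mul_pow, ← map_pow]
    norm_num
  rw [hX]
  linear_combination ((-1 : PowerSeries ℝ) ^ j * X ^ j) * key_aux g hg h h1 hrec n hn
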